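/- Let G₁, G₂, K, W, L ∈ ℂ[t][x,y,z] satisfy K·G₁ + W·G₂ = z·L. Assume G₁(x,y,0)·G₂(x,y,0) ≠ 0 and that G₁(x,y,0) and G₂(x,y,0) are coprime in ℂ[t][x,y] (every common divisor is a unit). Then either z divides both K and W, or there exist U₁, U₂, U₃ ∈ ℂ[t][x,y,z] such that L = U₁·G₁(x,y,0) + U₂·G₂(x,y,0) + z·U₃. -/
import Mathlib


open MvPolynomial

/-- Substitution `z = 0`: the map `ℂ[t][x,y,z] → ℂ[t][x,y]`, `P ↦ P(x,y,0)`. -/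
noncomputable def subZ0 :
    MvPolynomial (Fin 3) (Polynomial ℂ) →ₐ[Polynomial ℂ] MvPolynomial (Fin 2) (Polynomial ℂ) :=
  MvPolynomial.aeval
    ![(MvPolynomial.X 0 : MvPolynomial (Fin 2) (Polynomial ℂ)), MvPolynomial.X 1, 0]

/-- The inclusion `ℂ[t][x,y] ⊆ ℂ[t][x,y,z]`. -/
noncomputable def embXY :
    MvPolynomial (Fin 2) (Polynomial ℂ) →ₐ[Polynomial ℂ] MvPolynomial (Fin 3) (Polynomial ℂ) :=
  MvPolynomial.rename Fin.castSucc

lemma z_dvd_sub (P : MvPolynomial (Fin 3) (Polynomial ℂ)) :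
    MvPolynomial.X 2 ∣ P - embXY (subZ0 P) := by
  induction P using MvPolynomial.induction_on with
  | C a => simp [subZ0, embXY]
  | add p q hp hq =>
      have := dvd_add hp hq
      convert this using 1
      simp only [map_add]
      ring
  | mul_X p i hp =>
      have hX : MvPolynomial.X 2 ∣
          (MvPolynomial.X i : MvPolynomial (Fin 3) (Polynomial ℂ)) - embXY (subZ0 (MvPolynomial.X i)) := by
        fin_cases i
        · simp [subZ0, embXY]
        · simp [subZ0, embXY]
        · simp [subZ0, embXY]
      obtain ⟨c, hc⟩ := hp
      obtain ⟨d, hd⟩ := hX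
      refine ⟨c * MvPolynomial.X i + embXY (subZ0 p) * d, ?_⟩
      simp only [map_mul]
      linear_combination (MvPolynomial.X i : MvPolynomial (Fin 3) (Polynomial ℂ)) * hc +
        embXY (subZ0 p) * hd

/-- if `K·G₁ + W·G₂ = z·L` in `ℂ[t][x,y,z]`, with `G₁(x,y,0)·G₂(x,y,0) ≠ 0`
and `G₁(x,y,0)`, `G₂(x,y,0)` coprime in `ℂ[t][x,y]`, then either `z` divides both `K`
and `W`, or `L = U₁·G₁(x,y,0) + U₂·G₂(x,y,0) + z·U₃` for some `U₁, U₂, U₃`. -/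
theorem division_lemma_at_infinity
    (G₁ G₂ K W L : MvPolynomial (Fin 3) (Polynomial ℂ))
    (hKW : K * G₁ + W * G₂ = MvPolynomial.X 2 * L)
    (hG0 : subZ0 G₁ * subZ0 G₂ ≠ 0)
    (hcop : ∀ q : MvPolynomial (Fin 2) (Polynomial ℂ), q ∣ subZ0 G₁ → q ∣ subZ0 G₂ → IsUnit q) :
    (MvPolynomial.X 2 ∣ K ∧ MvPolynomial.X 2 ∣ W) ∨
      ∃ U₁ U₂ U₃ : MvPolynomial (Fin 3) (Polynomial ℂ),
        L = U₁ * embXY (subZ0 G₁) + U₂ * embXY (subZ0 G₂) + MvPolynomial.X 2 * U₃ := by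
  right
  have hG₁0 : subZ0 G₁ ≠ 0 := fun h => hG0 (by rw [h, zero_mul])
  have hG₂0 : subZ0 G₂ ≠ 0 := fun h => hG0 (by rw [h, mul_zero])
  -- substitute z = 0 in hKW
  have hz0 : subZ0 (MvPolynomial.X 2) = 0 := by simp [subZ0]
  have h0 : subZ0 K * subZ0 G₁ + subZ0 W * subZ0 G₂ = 0 := by
    have := congrArg subZ0 hKW
    simpa [map_add, map_mul, hz0] using this
  -- coprimality gives subZ0 G₂ ∣ subZ0 K
  have hrp : IsRelPrime (subZ0 G₂) (subZ0 G₁) := fun q hq hq' => hcop q hq' hq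
  have hdvd : subZ0 G₂ ∣ subZ0 K * subZ0 G₁ := ⟨-(subZ0 W), by linear_combination h0⟩
  obtain ⟨C, hC⟩ := hrp.dvd_of_dvd_mul_right hdvd
  -- deduce subZ0 W = -(C * subZ0 G₁)
  have hW0 : subZ0 W = -(C * subZ0 G₁) := by
    have h2 : subZ0 G₂ * (subZ0 W + C * subZ0 G₁) = 0 := by
      linear_combination h0 - subZ0 G₁ * hC
    rcases mul_eq_zero.mp h2 with h | h
    · exact absurd h hG₂0
    · linear_combination h
  obtain ⟨K', hK⟩ := z_dvd_sub K
  obtain ⟨W', hW⟩ := z_dvd_sub W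
  obtain ⟨G₁', hG1⟩ := z_dvd_sub G₁
  obtain ⟨G₂', hG2⟩ := z_dvd_sub G₂
  refine ⟨K' - embXY C * G₂', W' + embXY C * G₁', K' * G₁' + W' * G₂', ?_⟩
  have hz : (MvPolynomial.X 2 : MvPolynomial (Fin 3) (Polynomial ℂ)) ≠ 0 :=
    MvPolynomial.X_ne_zero 2
  apply mul_left_cancel₀ hz
  have heK : embXY (subZ0 K) = embXY (subZ0 G₂) * embXY C := by rw [← map_mul, hC]
  have heW : embXY (subZ0 W) = -(embXY C * embXY (subZ0 G₁)) := by
    rw [hW0]; simp [map_mul]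
  have hKe : K = embXY (subZ0 G₂) * embXY C + MvPolynomial.X 2 * K' := by
    rw [← heK]; linear_combination hK
  have hWe : W = -(embXY C * embXY (subZ0 G₁)) + MvPolynomial.X 2 * W' := by
    rw [← heW]; linear_combination hW
  have hG1e : G₁ = embXY (subZ0 G₁) + MvPolynomial.X 2 * G₁' := by linear_combination hG1
  have hG2e : G₂ = embXY (subZ0 G₂) + MvPolynomial.X 2 * G₂' := by linear_combination hG2
  rw [hG1e, hG2e, hKe, hWe] at hKW
  linear_combination -hKW
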